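/- Let X be a locally solid vector lattice and let T, S be linear operators on X with 0 ≤ T ≤ S. If S is a bb-bounded orthomorphism, then T is a bb-bounded orthomorphism. -/

import Mathlib

open Filter Topology Bornology Function Pointwise

/-- A set in a lattice-ordered group is solid if it contains every element
dominated in absolute value by one of its members. -/
def Solid {X : Type*} [Lattice X] [AddCommGroup X] (S : Set X) : Prop :=
  ∀ x y : X, |x| ≤ |y| → y ∈ S → x ∈ S

/-- The linear topology is locally solid: it admits a base at zero of solid sets. -/
def LocallySolid (X : Type*) [Lattice X] [AddCommGroup X] [TopologicalSpace X] : Prop :=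
  ∀ V ∈ 𝓝 (0 : X), ∃ U ∈ 𝓝 (0 : X), Solid U ∧ U ⊆ V

/-- Archimedean property of a vector lattice. -/
def ArchimedeanVL (X : Type*) [Lattice X] [AddCommGroup X] : Prop :=
  ∀ x y : X, (∀ n : ℕ, n • x ≤ y) → x ≤ 0

/-- A band preserving operator. -/
def BandPreserving {X : Type*} [Lattice X] [AddCommGroup X] [Module ℝ X]
    (T : X →ₗ[ℝ] X) : Prop :=
  ∀ x y : X, |x| ⊓ |y| = 0 → |T x| ⊓ |y| = 0

/-- An order bounded operator: it maps order intervals into order intervals. -/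
def OrderBounded {X : Type*} [Lattice X] [AddCommGroup X] [Module ℝ X]
    (T : X →ₗ[ℝ] X) : Prop :=
  ∀ a b : X, ∃ c d : X, T '' Set.Icc a b ⊆ Set.Icc c d

/-- An orthomorphism: an order bounded band preserving operator. -/
def Orthomorphism {X : Type*} [Lattice X] [AddCommGroup X] [Module ℝ X]
    (T : X →ₗ[ℝ] X) : Prop :=
  OrderBounded T ∧ BandPreserving T

/-- An `nb`-bounded operator: it maps some zero neighborhood to a topologically
bounded set. -/
def NbBounded {X : Type*} [Lattice X] [AddCommGroup X] [Module ℝ X]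
    [TopologicalSpace X] (T : X →ₗ[ℝ] X) : Prop :=
  ∃ U ∈ 𝓝 (0 : X), IsVonNBounded ℝ (T '' U)

/-- A `bb`-bounded operator: it maps topologically bounded sets to bounded sets. -/
def BbBounded {X : Type*} [Lattice X] [AddCommGroup X] [Module ℝ X]
    [TopologicalSpace X] (T : X →ₗ[ℝ] X) : Prop :=
  ∀ B : Set X, IsVonNBounded ℝ B → IsVonNBounded ℝ (T '' B)

section LatticeGroupAux

variable {X : Type*} [Lattice X] [AddCommGroup X]
  [CovariantClass X X (· + ·) (· ≤ ·)]

lemma aux_nsmul_nonneg {a : X} (ha : 0 ≤ a) (n : ℕ) : 0 ≤ n • a := by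
  induction n with
  | zero => simp
  | succ n ih => rw [succ_nsmul]; exact add_nonneg ih ha

lemma aux_inf_add_le {a b c : X} (ha : 0 ≤ a) (hb : 0 ≤ b) (hc : 0 ≤ c) :
    (a + b) ⊓ c ≤ a ⊓ c + b ⊓ c := by
  have h1 : (a + b) ⊓ c ≤ (a ⊓ c + b) ⊓ c := by
    refine le_inf ?_ inf_le_right
    calc (a + b) ⊓ c ≤ (a + b) ⊓ (c + b) :=
          inf_le_inf_left _ (le_add_of_nonneg_right hb)
      _ = a ⊓ c + b := (inf_add a c b).symm
  calc (a + b) ⊓ c ≤ (a ⊓ c + b) ⊓ c := h1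
    _ ≤ (a ⊓ c + b) ⊓ (a ⊓ c + c) :=
        inf_le_inf_left _ (le_add_of_nonneg_left (le_inf ha hc))
    _ = a ⊓ c + b ⊓ c := (add_inf b c (a ⊓ c)).symm

lemma aux_nsmul_inf_zero {a b : X} (ha : 0 ≤ a) (hb : 0 ≤ b)
    (hab : a ⊓ b = 0) (n : ℕ) : (n • a) ⊓ b = 0 := by
  induction n with
  | zero => simpa using inf_eq_left.2 hb
  | succ n ih =>
      refine le_antisymm ?_ (le_inf (aux_nsmul_nonneg ha _) hb)
      rw [succ_nsmul]
      calc (n • a + a) ⊓ b ≤ (n • a) ⊓ b + a ⊓ b :=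
            aux_inf_add_le (aux_nsmul_nonneg ha n) ha hb
        _ = 0 := by rw [ih, hab, add_zero]

lemma aux_nsmul_disjoint {a b : X} (ha : 0 ≤ a) (hb : 0 ≤ b)
    (hab : a ⊓ b = 0) (n : ℕ) : (n • a) ⊓ (n • b) = 0 := by
  have h1 := aux_nsmul_inf_zero ha hb hab n
  have h2 := aux_nsmul_inf_zero hb (aux_nsmul_nonneg ha n)
    (by rw [inf_comm]; exact h1) n
  rw [inf_comm]; exact h2

lemma aux_posPart_of_disjoint {p q : X} (hpq : p ⊓ q = 0) :
    (p - q)⁺ = p ∧ (p - q)⁻ = q := by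
  have hsup : p ⊔ q = p + q := by
    have := inf_add_sup p q
    rw [hpq, zero_add] at this
    exact this
  have h1 : (p - q)⁺ = p := by
    have e : (p - q) ⊔ 0 = (p ⊔ q) - q := by
      rw [sub_eq_add_neg, sub_eq_add_neg, sup_add p q (-q)]
      simp
    rw [posPart_def, e, hsup, add_sub_cancel_right]
  refine ⟨h1, ?_⟩
  have := posPart_sub_negPart (p - q)
  rw [h1] at this
  -- this : p - (p - q)⁻ = p - q
  exact sub_right_inj.1 this

lemma aux_abs_nsmul (n : ℕ) (z : X) : |n • z| = n • |z| := by
  have hd : (n • z⁺) ⊓ (n • z⁻) = 0 :=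
    aux_nsmul_disjoint (posPart_nonneg _) (negPart_nonneg _)
      (posPart_inf_negPart_eq_zero z) n
  have hz : n • z = n • z⁺ - n • z⁻ := by
    rw [← nsmul_sub, posPart_sub_negPart]
  obtain ⟨hp, hq⟩ := aux_posPart_of_disjoint hd
  rw [hz, ← posPart_add_negPart (n • z⁺ - n • z⁻), hp, hq, ← nsmul_add,
    posPart_add_negPart]

lemma aux_nsmul_le_cancel {a b : X} {n : ℕ} (hn : n ≠ 0)
    (h : n • a ≤ n • b) : a ≤ b := by
  set d := b - a with hdef
  have hd : 0 ≤ n • d := by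
    have : 0 ≤ n • b - n • a := sub_nonneg.2 h
    rwa [← nsmul_sub] at this
  have hdisj : (n • d⁺) ⊓ (n • d⁻) = 0 :=
    aux_nsmul_disjoint (posPart_nonneg _) (negPart_nonneg _)
      (posPart_inf_negPart_eq_zero d) n
  have hw : n • d = n • d⁺ - n • d⁻ := by
    rw [← nsmul_sub, posPart_sub_negPart]
  have hle : n • d⁻ ≤ n • d⁺ := by
    have := hd
    rw [hw] at this
    exact sub_nonneg.1 this
  have hneg0 : n • d⁻ = 0 := by
    rw [← hdisj]; exact (inf_eq_right.2 hle).symm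
  obtain ⟨m, rfl⟩ := Nat.exists_eq_succ_of_ne_zero hn
  have hd' : d⁻ ≤ (m + 1) • d⁻ := by
    rw [succ_nsmul]
    exact le_add_of_nonneg_left (aux_nsmul_nonneg (negPart_nonneg _) m)
  have : d⁻ = 0 := le_antisymm (hneg0 ▸ hd') (negPart_nonneg _)
  have hd0 : 0 ≤ d := by
    have := posPart_sub_negPart d
    rw [this.symm, ‹d⁻ = 0›, sub_zero]
    exact posPart_nonneg d
  exact sub_nonneg.1 hd0

end LatticeGroupAux

lemma solidHull_isVonNBounded {X : Type*} [Lattice X] [AddCommGroup X] [Module ℝ X]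
    [TopologicalSpace X] [IsTopologicalAddGroup X] [ContinuousSMul ℝ X]
    [CovariantClass X X (· + ·) (· ≤ ·)]
    (hls : LocallySolid X) {A : Set X} (hA : IsVonNBounded ℝ A) :
    IsVonNBounded ℝ {x | ∃ y ∈ A, |x| ≤ |y|} := by
  intro V hV
  have hWmem : balancedCore ℝ V ∈ 𝓝 (0 : X) := balancedCore_mem_nhds_zero hV
  set W := balancedCore ℝ V with hW
  have hWbal : Balanced ℝ W := balancedCore_balanced V
  have hWsub : W ⊆ V := balancedCore_subset V
  obtain ⟨U, hUmem, hUsolid, hUW⟩ := hls W hWmem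
  obtain ⟨r, hr⟩ := absorbs_iff_norm.1 (hA hUmem)
  set n : ℕ := ⌈r⌉₊ + 1 with hn
  have hn0 : (n : ℝ) ≠ 0 := by positivity
  have hnr : r ≤ ‖(n : ℝ)‖ := by
    rw [Real.norm_natCast]
    calc r ≤ (⌈r⌉₊ : ℝ) := Nat.le_ceil r
      _ ≤ (n : ℝ) := by exact_mod_cast Nat.le_succ _
  have hAn : A ⊆ (n : ℝ) • U := hr _ hnr
  rw [absorbs_iff_norm]
  refine ⟨(n : ℝ), fun c hc x hx => ?_⟩
  obtain ⟨y, hyA, hxy⟩ := hx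
  obtain ⟨u, hu, huy⟩ := hAn hyA
  have hcn : ‖(n : ℝ)‖ ≤ ‖c‖ := by rw [Real.norm_natCast]; exact hc
  set z := (n : ℝ)⁻¹ • x with hz
  have hzx : (n : ℝ) • z = x := smul_inv_smul₀ hn0 x
  have hnz : n • z = x := by rw [← Nat.cast_smul_eq_nsmul ℝ, hzx]
  have huy' : (n : ℝ) • u = y := huy
  have hnu : n • u = y := by rw [← Nat.cast_smul_eq_nsmul ℝ, huy']
  have hzu : |z| ≤ |u| := by
    refine aux_nsmul_le_cancel (n := n) (by positivity) ?_
    rw [← aux_abs_nsmul, ← aux_abs_nsmul, hnz, hnu]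
    exact hxy
  have hzU : z ∈ U := hUsolid z u hzu hu
  have hxW : x ∈ (n : ℝ) • W := ⟨z, hUW hzU, hzx⟩
  have h2 : ((n : ℝ) : ℝ) • W ⊆ c • W := hWbal.smul_mono hcn
  exact Set.smul_set_mono hWsub (h2 hxW)

/-- domination for `bb`-bounded orthomorphisms: if `0 ≤ T ≤ S` and `S`
is a `bb`-bounded orthomorphism, then so is `T`. -/
theorem domination_bbBounded {X : Type*} [Lattice X] [AddCommGroup X] [Module ℝ X]
    [TopologicalSpace X] [IsTopologicalAddGroup X] [ContinuousSMul ℝ X]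
    [CovariantClass X X (· + ·) (· ≤ ·)]
    (hls : LocallySolid X)
    (T S : X →ₗ[ℝ] X)
    (hTpos : ∀ x : X, 0 ≤ x → 0 ≤ T x)
    (hTS : ∀ x : X, 0 ≤ x → T x ≤ S x)
    (hS : Orthomorphism S) (hSbb : BbBounded S) :
    Orthomorphism T ∧ BbBounded T := by
  have hTmono : ∀ a b : X, a ≤ b → T a ≤ T b := by
    intro a b hab
    have := hTpos (b - a) (sub_nonneg.2 hab)
    rw [map_sub] at this
    exact sub_nonneg.1 this
  have key : ∀ x : X, |T x| ≤ S |x| := by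
    intro x
    have hp : 0 ≤ T x⁺ := hTpos _ (posPart_nonneg x)
    have hq : 0 ≤ T x⁻ := hTpos _ (negPart_nonneg x)
    have e : T x = T x⁺ - T x⁻ := by rw [← map_sub, posPart_sub_negPart]
    calc |T x| = |T x⁺ - T x⁻| := by rw [e]
      _ ≤ |T x⁺| + |T x⁻| := by
          rw [sub_eq_add_neg]
          exact (abs_add_le _ _).trans (by rw [abs_neg])
      _ = T x⁺ + T x⁻ := by rw [abs_of_nonneg hp, abs_of_nonneg hq]
      _ = T |x| := by rw [← map_add, posPart_add_negPart]
      _ ≤ S |x| := hTS _ (abs_nonneg x)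
  have hSabs : ∀ x : X, 0 ≤ S |x| := fun x =>
    le_trans (hTpos _ (abs_nonneg x)) (hTS _ (abs_nonneg x))
  refine ⟨⟨?_, ?_⟩, ?_⟩
  · intro a b
    refine ⟨T a, T b, ?_⟩
    rintro _ ⟨x, ⟨hax, hxb⟩, rfl⟩
    exact ⟨hTmono _ _ hax, hTmono _ _ hxb⟩
  · intro x y hxy
    have h1 : |S (|x|)| ⊓ |y| = 0 := hS.2 (|x|) y (by rwa [abs_abs])
    rw [abs_of_nonneg (hSabs x)] at h1
    refine le_antisymm ?_ (le_inf (abs_nonneg _) (abs_nonneg _))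
    calc |T x| ⊓ |y| ≤ S |x| ⊓ |y| := inf_le_inf_right _ (key x)
      _ = 0 := h1
  · intro B hB
    have h1 := solidHull_isVonNBounded hls hB
    have h2 := hSbb _ h1
    have h3 := solidHull_isVonNBounded hls h2
    refine h3.subset ?_
    rintro _ ⟨x, hxB, rfl⟩
    refine ⟨S |x|, ⟨|x|, ⟨x, hxB, le_of_eq (abs_abs x)⟩, rfl⟩, ?_⟩
    rw [abs_of_nonneg (hSabs x)]
    exact key x
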